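/- Let (M,g) be a complete Riemannian manifold with a pole x₀ and distance function r. Suppose there exist positive functions h₁(r), h₂(r) with h₁(r)[g − dr⊗dr] ≤ Hess(r) ≤ h₂(r)[g − dr⊗dr] and r·h₂(r) ≥ 1. Then the eigenvalues λ₁ ≤ … ≤ λ_m of Hess(r²) satisfy Σᵢλᵢ − p·λ_m ≥ 2(1 + (m−1)·r·h₁(r) − p·r·h₂(r)). -/

import Mathlib

open RealInnerProductSpace

/-- pointwise eigenvalue estimate.  At a point of an (m+1)-dimensional
manifold with a pole, `ρv` is the radial unit vector `∂/∂r`, `A` is the self-adjoint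
operator representing `Hess(r)` (vanishing radially, with
`h₁(r)[g - dr⊗dr] ≤ Hess(r) ≤ h₂(r)[g - dr⊗dr]` and `r·h₂(r) ≥ 1`), and
`lam 0 ≤ … ≤ lam m` are the eigenvalues of `Hess(r²) = 2 dr⊗dr + 2r Hess(r)`
(eigenbasis `b`).  Then `Σᵢ λᵢ − p·λ_max ≥ 2(1 + (dim−1)·r·h₁ − p·r·h₂)`. -/
theorem hessian_eigenvalue_estimate {E : Type*} [NormedAddCommGroup E]
    [InnerProductSpace ℝ E] {m : ℕ}
    (p r h₁ h₂ : ℝ) (hp : 1 ≤ p) (hr : 0 < r)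
    (hh₁ : 0 < h₁) (hh₂ : 0 < h₂) (hrh₂ : 1 ≤ r * h₂)
    (ρv : E) (hρv : ‖ρv‖ = 1)
    (A : E →ₗ[ℝ] E) (hAsym : ∀ v w, ⟪A v, w⟫ = ⟪v, A w⟫) (hAρ : A ρv = 0)
    (hA_lb : ∀ v, ⟪v, ρv⟫ = 0 → h₁ * ‖v‖ ^ 2 ≤ ⟪A v, v⟫)
    (hA_ub : ∀ v, ⟪v, ρv⟫ = 0 → ⟪A v, v⟫ ≤ h₂ * ‖v‖ ^ 2)
    (lam : Fin (m + 1) → ℝ) (hmono : Monotone lam)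
    (b : OrthonormalBasis (Fin (m + 1)) ℝ E)
    (hb : ∀ i, (2 * ⟪b i, ρv⟫) • ρv + (2 * r) • A (b i) = lam i • b i) :
    2 * (1 + (m : ℝ) * (r * h₁) - p * (r * h₂)) ≤ (∑ i, lam i) - p * lam (Fin.last m) := by
  have hρρ : ⟪ρv, ρv⟫ = 1 := by
    rw [real_inner_self_eq_norm_sq, hρv]; norm_num
  set c : Fin (m+1) → ℝ := fun i => ⟪b i, ρv⟫ with hc
  set v : Fin (m+1) → E := fun i => b i - c i • ρv with hv
  have hvρ : ∀ i, ⟪v i, ρv⟫ = 0 := by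
    intro i
    simp [hv, inner_sub_left, real_inner_smul_left, hρρ, hc, hρv]
  have hAv : ∀ i, A (b i) = A (v i) := by
    intro i; simp [hv, map_sub, map_smul, hAρ]
  have hbi : ∀ i, ‖b i‖ = 1 := fun i => b.orthonormal.1 i
  have hbb : ∀ i, ⟪b i, b i⟫ = 1 := by
    intro i; rw [real_inner_self_eq_norm_sq, hbi]; norm_num
  have hcomm : ∀ i, (⟪ρv, b i⟫ : ℝ) = c i := fun i => real_inner_comm _ _
  have hnv : ∀ i, ‖v i‖^2 = 1 - (c i)^2 := by
    intro i
    rw [← real_inner_self_eq_norm_sq]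
    simp only [hv, inner_sub_left, inner_sub_right, real_inner_smul_left,
      real_inner_smul_right, hρρ, hbb, hcomm]
    ring
  have hAvρ : ∀ i, ⟪A (v i), ρv⟫ = 0 := by
    intro i; rw [hAsym, hAρ, inner_zero_right]
  have hlam : ∀ i, lam i = 2 * (c i)^2 + 2*r*⟪A (v i), v i⟫ := by
    intro i
    have h := congrArg (fun x => ⟪x, b i⟫) (hb i)
    simp only [inner_add_left, real_inner_smul_left, hbb, hAv i] at h
    have hexp : ⟪A (v i), b i⟫ = ⟪A (v i), v i⟫ := by
      have : b i = v i + c i • ρv := by simp [hv]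
      rw [this, inner_add_right, real_inner_smul_right, hAvρ i]; ring
    rw [hexp, hcomm] at h
    linear_combination -h
  have hcsq : ∑ i, (c i)^2 = 1 := by
    have := b.sum_inner_mul_inner ρv ρv
    rw [hρρ] at this
    rw [← this]
    apply Finset.sum_congr rfl
    intro i _
    simp [hc, real_inner_comm ρv (b i)]; ring
  have hcle : ∀ i, (c i)^2 ≤ 1 := by
    intro i
    have := hnv i
    nlinarith [sq_nonneg ‖v i‖]
  -- lower bound for sum
  have hSum : 2 + 2*r*h₁*(m:ℝ) ≤ ∑ i, lam i := by
    have step : ∀ i, 2*(c i)^2 + 2*r*(h₁*(1 - (c i)^2)) ≤ lam i := by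
      intro i
      rw [hlam i]
      have h1 := hA_lb (v i) (hvρ i)
      rw [hnv i] at h1
      nlinarith
    calc 2 + 2*r*h₁*(m:ℝ)
        = ∑ i, (2*(c i)^2 + 2*r*(h₁*(1 - (c i)^2))) := by
          have hsub : ∑ i : Fin (m+1), (h₁*(1 - (c i)^2)) = h₁ * ((m:ℝ) + 1 - 1) := by
            rw [← Finset.mul_sum, Finset.sum_sub_distrib, hcsq]
            simp
          rw [Finset.sum_add_distrib, ← Finset.mul_sum, hcsq, ← Finset.mul_sum, hsub]
          ring
      _ ≤ ∑ i, lam i := Finset.sum_le_sum (fun i _ => step i)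
  -- upper bound for lam last
  have hLast : lam (Fin.last m) ≤ 2*r*h₂ := by
    rw [hlam (Fin.last m)]
    have h2 := hA_ub (v (Fin.last m)) (hvρ (Fin.last m))
    rw [hnv (Fin.last m)] at h2
    have := hcle (Fin.last m)
    nlinarith [sq_nonneg (c (Fin.last m))]
  have hpL : p * lam (Fin.last m) ≤ p * (2*r*h₂) :=
    mul_le_mul_of_nonneg_left hLast (by linarith)
  nlinarith
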